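/- If H is an induced subgraph of a finite simple graph G (i.e., H is the subgraph of G induced on some subset of the vertices of G), then γ_gr(H) ≤ γ_gr(G). -/

import Mathlib

/-- The closed neighborhood `N[v] = {v} ∪ N(v)` of a vertex. -/
def closedNbhd {V : Type*} (G : SimpleGraph V) (v : V) : Set V :=
  insert v (G.neighborSet v)

/-- A sequence (list) of pairwise distinct vertices is legal if each vertex
footprints some vertex not dominated by the previous ones. -/
def IsLegalSeq {V : Type*} (G : SimpleGraph V) (l : List V) : Prop :=
  l.Nodup ∧ ∀ i : Fin l.length, ∃ u,
    u ∈ closedNbhd G (l.get i) ∧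
    ∀ j : Fin l.length, (j : ℕ) < (i : ℕ) → u ∉ closedNbhd G (l.get j)

/-- A legal dominating sequence. -/
def IsDomSeq {V : Type*} (G : SimpleGraph V) (l : List V) : Prop :=
  IsLegalSeq G l ∧ ∀ u : V, ∃ v ∈ l, u ∈ closedNbhd G v

/-- The Grundy domination number: the maximum length of a legal dominating sequence. -/
noncomputable def grundyDomNum {V : Type*} (G : SimpleGraph V) : ℕ :=
  sSup {k : ℕ | ∃ l : List V, IsDomSeq G l ∧ l.length = k}

lemma self_mem_closedNbhd {V : Type*} (G : SimpleGraph V) (v : V) :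
    v ∈ closedNbhd G v := Set.mem_insert _ _

lemma extend_legal {V : Type*} (G : SimpleGraph V) {l : List V} {u : V}
    (hl : IsLegalSeq G l) (hu : ∀ v ∈ l, u ∉ closedNbhd G v) :
    IsLegalSeq G (l ++ [u]) := by
  obtain ⟨hnd, hleg⟩ := hl
  have hunotmem : u ∉ l := fun h => hu u h (self_mem_closedNbhd G u)
  constructor
  · simp [List.nodup_append, hnd, hunotmem]
    rintro a ha rfl
    exact hunotmem ha
  · intro i
    have hlen : (l ++ [u]).length = l.length + 1 := by simp
    have hi2 : (i : ℕ) < l.length + 1 := hlen ▸ i.2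
    rcases lt_or_eq_of_le (Nat.lt_succ_iff.mp hi2) with hi | hi
    · obtain ⟨w, hw1, hw2⟩ := hleg ⟨i, hi⟩
      refine ⟨w, ?_, ?_⟩
      · simpa [List.getElem_append_left hi] using hw1
      · intro j hj
        have hjl : (j : ℕ) < l.length := lt_trans hj hi
        have := hw2 ⟨j, hjl⟩ hj
        simpa [List.getElem_append_left hjl] using this
    · refine ⟨u, ?_, ?_⟩
      · have : (l ++ [u]).get i = u := by
          simp [List.get_eq_getElem, List.getElem_append_right (le_of_eq hi.symm), hi]
        rw [this]; exact self_mem_closedNbhd G u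
      · intro j hj
        have hjl : (j : ℕ) < l.length := by omega
        have : (l ++ [u]).get j = l.get ⟨j, hjl⟩ := by
          simp [List.get_eq_getElem, List.getElem_append_left hjl]
        rw [this]
        exact hu _ (List.mem_iff_get.mpr ⟨_, rfl⟩)

lemma legal_length_le {V : Type*} [Fintype V] (G : SimpleGraph V) {l : List V}
    (hl : IsLegalSeq G l) : l.length ≤ Fintype.card V :=
  hl.1.length_le_card

lemma extend_to_dom {V : Type*} [Fintype V] (G : SimpleGraph V) :
    ∀ n (l : List V), IsLegalSeq G l → Fintype.card V ≤ l.length + n →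
      ∃ l', IsDomSeq G l' ∧ l.length ≤ l'.length := by
  intro n
  induction n with
  | zero =>
    intro l hl hcard
    classical
    refine ⟨l, ⟨hl, ?_⟩, le_rfl⟩
    intro u
    have hlen : l.length = Fintype.card V :=
      le_antisymm (legal_length_le G hl) (by simpa using hcard)
    have hmem : u ∈ l := by
      have : l.toFinset = Finset.univ := by
        apply Finset.eq_univ_of_card
        rw [List.toFinset_card_of_nodup hl.1, hlen, Fintype.card]
      rw [← List.mem_toFinset, this]
      exact Finset.mem_univ u
    exact ⟨u, hmem, self_mem_closedNbhd G u⟩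
  | succ n ih =>
    intro l hl hcard
    by_cases hdom : ∀ u : V, ∃ v ∈ l, u ∈ closedNbhd G v
    · exact ⟨l, ⟨hl, hdom⟩, le_rfl⟩
    · push_neg at hdom
      obtain ⟨u, hu⟩ := hdom
      have hu' : ∀ v ∈ l, u ∉ closedNbhd G v := fun v hv hc => hu v hv hc
      obtain ⟨l', hl', hle⟩ := ih (l ++ [u]) (extend_legal G hl hu') (by simp; omega)
      exact ⟨l', hl', by simp at hle; omega⟩

lemma mem_closedNbhd_induce {V : Type*} (G : SimpleGraph V) (s : Set V) (u v : s) :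
    u ∈ closedNbhd (G.induce s) v ↔ (u : V) ∈ closedNbhd G (v : V) := by
  simp [closedNbhd, SimpleGraph.mem_neighborSet, Subtype.ext_iff, SimpleGraph.comap_adj]

theorem grundy_induced_subgraph_le {V : Type*} [Fintype V] (G : SimpleGraph V)
    (s : Set V) :
    grundyDomNum (G.induce s) ≤ grundyDomNum G := by
  classical
  apply csSup_le'
  rintro k ⟨l, ⟨⟨hnd, hleg⟩, _⟩, rfl⟩
  -- map l to V
  set L : List V := l.map Subtype.val with hL
  have hlen : L.length = l.length := by simp [hL]
  have hLleg : IsLegalSeq G L := by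
    constructor
    · exact hnd.map Subtype.val_injective
    · intro i
      have hi : (i : ℕ) < l.length := hlen ▸ i.2
      obtain ⟨w, hw1, hw2⟩ := hleg ⟨i, hi⟩
      refine ⟨(w : V), ?_, ?_⟩
      · have : L.get i = (l.get ⟨i, hi⟩ : V) := by
          rw [List.get_eq_getElem, List.getElem_map]; rfl
        rw [this]
        exact (mem_closedNbhd_induce G s _ _).mp hw1
      · intro j hj
        have hjl : (j : ℕ) < l.length := hlen ▸ j.2
        have : L.get j = (l.get ⟨j, hjl⟩ : V) := by
          rw [List.get_eq_getElem, List.getElem_map]; rfl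
        rw [this]
        exact fun hc => hw2 ⟨j, hjl⟩ hj ((mem_closedNbhd_induce G s _ _).mpr hc)
  obtain ⟨l', hl', hle⟩ := extend_to_dom G (Fintype.card V) L hLleg (by omega)
  have hmem : l'.length ∈ {k : ℕ | ∃ l : List V, IsDomSeq G l ∧ l.length = k} :=
    ⟨l', hl', rfl⟩
  have hbdd : BddAbove {k : ℕ | ∃ l : List V, IsDomSeq G l ∧ l.length = k} := by
    refine ⟨Fintype.card V, ?_⟩
    rintro k ⟨m, hm, rfl⟩
    exact legal_length_le G hm.1
  calc l.length = L.length := hlen.symm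
    _ ≤ l'.length := hle
    _ ≤ _ := le_csSup hbdd hmem
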